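/- Let X be a random variable with |X| ≤ 1 almost surely, E[X] = 0, and E[X²] ≤ ε². Then for all λ ≥ 0, E[e^{λX}] ≤ (e^{-λε²} + ε² e^{λ})/(1 + ε²). -/

import Mathlib

open MeasureTheory Real

private lemma psi_deriv_nonneg (x : ℝ) : 0 ≤ (x - 1) * rexp x + 1 := by
  have h := Real.add_one_le_exp (-x)
  rw [Real.exp_neg] at h
  have hx := Real.exp_pos x
  have h2 : (1 - x) * rexp x ≤ 1 := by
    calc (1 - x) * rexp x ≤ (rexp x)⁻¹ * rexp x := by nlinarith
    _ = 1 := inv_mul_cancel₀ hx.ne'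
  nlinarith

private lemma psi_mono : Monotone (fun x : ℝ => (x - 2) * rexp x + x + 2) := by
  apply monotone_of_deriv_nonneg
  · fun_prop
  · intro x
    have h : HasDerivAt (fun x : ℝ => (x - 2) * rexp x + x + 2) ((x - 1) * rexp x + 1) x := by
      have h1 := ((hasDerivAt_id x).sub_const 2).mul (Real.hasDerivAt_exp x)
      have h2 := (h1.add (hasDerivAt_id x)).add_const 2
      refine h2.congr_deriv ?_
      simp only [id_eq]; ring
    rw [h.deriv]; exact psi_deriv_nonneg x

private lemma psi_nonneg {x : ℝ} (hx : 0 ≤ x) : 0 ≤ (x - 2) * rexp x + x + 2 := by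
  have := psi_mono hx
  simpa using this

private lemma psi_nonpos {x : ℝ} (hx : x ≤ 0) : (x - 2) * rexp x + x + 2 ≤ 0 := by
  have := psi_mono hx
  simpa using this

private lemma quad_deriv (x : ℝ) :
    HasDerivAt (fun x : ℝ => 1 + x + x^2/2 - rexp x) (1 + x - rexp x) x := by
  have h1 := (((hasDerivAt_const x (1:ℝ)).add (hasDerivAt_id x)).add
    (((hasDerivAt_pow 2 x)).div_const 2)).sub (Real.hasDerivAt_exp x)
  refine h1.congr_deriv ?_
  simp only [id_eq, Nat.cast_ofNat, pow_one]
  ring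

private lemma quad_anti : Antitone (fun x : ℝ => 1 + x + x^2/2 - rexp x) := by
  apply antitone_of_deriv_nonpos
  · fun_prop
  · intro x
    rw [(quad_deriv x).deriv]
    have := Real.add_one_le_exp x
    linarith

private lemma quad_bound {x : ℝ} (hx : x ≤ 0) : rexp x ≤ 1 + x + x^2/2 := by
  have := quad_anti hx
  simp only [Real.exp_zero] at this
  nlinarith [this]

private lemma quad_bound' {x : ℝ} (hx : 0 ≤ x) : 1 + x + x^2/2 ≤ rexp x := by
  have := quad_anti hx
  simp only [Real.exp_zero] at this
  nlinarith [this]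

private lemma phi_hasDeriv {x : ℝ} (hx : x ≠ 0) :
    HasDerivAt (fun x : ℝ => (rexp x - 1 - x)/x^2)
      (((rexp x - 1) * x^2 - (rexp x - 1 - x) * (2*x))/(x^2)^2) x := by
  have hu : HasDerivAt (fun x : ℝ => rexp x - 1 - x) (rexp x - 1) x := by
    have := ((Real.hasDerivAt_exp x).sub_const 1).sub (hasDerivAt_id x)
    exact this
  have hv : HasDerivAt (fun x : ℝ => x^2) (2*x) x := by
    simpa using hasDerivAt_pow 2 x
  exact hu.div hv (pow_ne_zero 2 hx)

private lemma phi_deriv_nonneg {x : ℝ} (hx : x ≠ 0) :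
    0 ≤ deriv (fun x : ℝ => (rexp x - 1 - x)/x^2) x := by
  rw [(phi_hasDeriv hx).deriv]
  have hnum : (rexp x - 1) * x^2 - (rexp x - 1 - x) * (2*x)
      = x * ((x - 2) * rexp x + x + 2) := by ring
  rw [hnum]
  apply div_nonneg _ (by positivity)
  rcases lt_or_gt_of_ne hx with h | h
  · nlinarith [psi_nonpos h.le]
  · exact mul_nonneg h.le (psi_nonneg h.le)

private lemma phi_mono_pos : MonotoneOn (fun x : ℝ => (rexp x - 1 - x)/x^2) (Set.Ioi 0) := by
  apply monotoneOn_of_deriv_nonneg (convex_Ioi 0)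
  · exact ContinuousOn.div (by fun_prop) (by fun_prop)
      (fun x hx => pow_ne_zero 2 (ne_of_gt hx))
  · intro x hx
    rw [interior_Ioi] at hx
    exact (phi_hasDeriv (ne_of_gt hx)).differentiableAt.differentiableWithinAt
  · intro x hx
    rw [interior_Ioi] at hx
    exact phi_deriv_nonneg (ne_of_gt hx)

private lemma phi_mono_neg : MonotoneOn (fun x : ℝ => (rexp x - 1 - x)/x^2) (Set.Iio 0) := by
  apply monotoneOn_of_deriv_nonneg (convex_Iio 0)
  · exact ContinuousOn.div (by fun_prop) (by fun_prop)
      (fun x hx => pow_ne_zero 2 (ne_of_lt hx))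
  · intro x hx
    rw [interior_Iio] at hx
    exact (phi_hasDeriv (ne_of_lt hx)).differentiableAt.differentiableWithinAt
  · intro x hx
    rw [interior_Iio] at hx
    exact phi_deriv_nonneg (ne_of_lt hx)

private lemma exp_sub_nonneg' (x : ℝ) : 0 ≤ rexp x - 1 - x := by
  have := Real.add_one_le_exp x; linarith

private lemma phi_mono {u v : ℝ} (huv : u ≤ v) :
    v^2 * (rexp u - 1 - u) ≤ u^2 * (rexp v - 1 - v) := by
  rcases le_or_gt u 0 with hu | hu
  · rcases le_or_gt v 0 with hv | hv
    · rcases eq_or_lt_of_le hv with rfl | hv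
      · simp
      · have h := phi_mono_neg (Set.mem_Iio.2 (lt_of_le_of_lt huv hv)) (Set.mem_Iio.2 hv) huv
        have hune : u ≠ 0 := ne_of_lt (lt_of_le_of_lt huv hv)
        have hu2 : (0:ℝ) < u^2 := (sq_nonneg u).lt_of_ne (Ne.symm (pow_ne_zero 2 hune))
        have hv2 : (0:ℝ) < v^2 :=
          (sq_nonneg v).lt_of_ne (Ne.symm (pow_ne_zero 2 (ne_of_lt hv)))
        rw [div_le_div_iff₀ hu2 hv2] at h
        linarith
    · have h1 : rexp u - 1 - u ≤ u^2/2 := by have := quad_bound hu; linarith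
      have h2 : v^2/2 ≤ rexp v - 1 - v := by have := quad_bound' hv.le; linarith
      calc v^2*(rexp u - 1 - u) ≤ v^2*(u^2/2) := mul_le_mul_of_nonneg_left h1 (sq_nonneg v)
        _ = u^2*(v^2/2) := by ring
        _ ≤ u^2*(rexp v - 1 - v) := mul_le_mul_of_nonneg_left h2 (sq_nonneg u)
  · have h := phi_mono_pos (Set.mem_Ioi.2 hu) (Set.mem_Ioi.2 (lt_of_lt_of_le hu huv)) huv
    have hu2 : (0:ℝ) < u^2 := pow_pos hu 2
    have hv2 : (0:ℝ) < v^2 := pow_pos (lt_of_lt_of_le hu huv) 2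
    rw [div_le_div_iff₀ hu2 hv2] at h
    linarith

private lemma pointwise_bound {s lam x : ℝ} (hs : 0 < s) (hlam : 0 ≤ lam) (hx : x ≤ 1) :
    rexp (lam * x) ≤ rexp (-lam * s) * (1 + lam * (x + s)) +
      rexp (-lam * s) * (rexp (lam * (1 + s)) - 1 - lam * (1 + s)) / (1 + s)^2 * (x + s)^2 := by
  have h1s : (0:ℝ) < 1 + s := by linarith
  rcases eq_or_lt_of_le hlam with rfl | hlam'
  · simp
  · have huv : lam*(x+s) ≤ lam*(1+s) := by
      apply mul_le_mul_of_nonneg_left (by linarith) hlam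
    have key := phi_mono huv
    have hl2 : (0:ℝ) < lam^2 := pow_pos hlam' 2
    have hkey2 : (1+s)^2 * (rexp (lam*(x+s)) - 1 - lam*(x+s))
        ≤ (x+s)^2 * (rexp (lam*(1+s)) - 1 - lam*(1+s)) := by
      apply le_of_mul_le_mul_left _ hl2
      calc lam^2 * ((1+s)^2 * (rexp (lam*(x+s)) - 1 - lam*(x+s)))
          = (lam*(1+s))^2 * (rexp (lam*(x+s)) - 1 - lam*(x+s)) := by ring
        _ ≤ (lam*(x+s))^2 * (rexp (lam*(1+s)) - 1 - lam*(1+s)) := key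
        _ = lam^2 * ((x+s)^2 * (rexp (lam*(1+s)) - 1 - lam*(1+s))) := by ring
    have h3 : rexp (lam*(x+s)) - 1 - lam*(x+s)
        ≤ (x+s)^2 * (rexp (lam*(1+s)) - 1 - lam*(1+s)) / (1+s)^2 := by
      rw [le_div_iff₀ (by positivity)]
      nlinarith [hkey2]
    have hinner : rexp (lam*(x+s)) ≤ 1 + lam*(x+s) +
        (rexp (lam*(1+s)) - 1 - lam*(1+s))/(1+s)^2*(x+s)^2 := by
      have heq : (rexp (lam*(1+s)) - 1 - lam*(1+s))/(1+s)^2*(x+s)^2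
          = (x+s)^2 * (rexp (lam*(1+s)) - 1 - lam*(1+s)) / (1+s)^2 := by ring
      rw [heq]; linarith
    calc rexp (lam*x) = rexp (-lam*s) * rexp (lam*(x+s)) := by
          rw [← Real.exp_add]; congr 1; ring
      _ ≤ rexp (-lam*s) * (1 + lam*(x+s)
            + (rexp (lam*(1+s)) - 1 - lam*(1+s))/(1+s)^2*(x+s)^2) :=
          mul_le_mul_of_nonneg_left hinner (Real.exp_pos _).le
      _ = rexp (-lam * s) * (1 + lam * (x + s)) +
          rexp (-lam * s) * (rexp (lam * (1 + s)) - 1 - lam * (1 + s)) / (1 + s)^2 * (x + s)^2 := by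
          ring

/-- If `|X| ≤ 1` a.s., `E[X] = 0` and `E[X²] ≤ ε²`, then for every `λ ≥ 0`,
`E[exp (λ X)] ≤ (exp (-λ ε²) + ε² exp λ) / (1 + ε²)`. -/
theorem mgf_le_two_point {Ω : Type*} [MeasurableSpace Ω] (μ : Measure Ω)
    [IsProbabilityMeasure μ] (X : Ω → ℝ) (hXm : Measurable X) (ε : ℝ) (hε : 0 < ε)
    (hbdd : ∀ᵐ ω ∂μ, |X ω| ≤ 1) (hmean : ∫ ω, X ω ∂μ = 0)
    (hvar : ∫ ω, (X ω) ^ 2 ∂μ ≤ ε ^ 2) :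
    ∀ lam : ℝ, 0 ≤ lam →
      ∫ ω, Real.exp (lam * X ω) ∂μ
        ≤ (Real.exp (-lam * ε ^ 2) + ε ^ 2 * Real.exp lam) / (1 + ε ^ 2) := by
  intro lam hlam
  set s : ℝ := ε ^ 2 with hs_def
  have hs : 0 < s := by positivity
  have h1s : (0:ℝ) < 1 + s := by linarith
  set c : ℝ := rexp (-lam * s) * (rexp (lam * (1 + s)) - 1 - lam * (1 + s)) / (1 + s)^2
    with hc_def
  have hc : 0 ≤ c := by
    apply div_nonneg _ (by positivity)
    exact mul_nonneg (Real.exp_pos _).le (exp_sub_nonneg' _)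
  set A : ℝ := rexp (-lam * s) * (1 + lam * s) + c * s^2 with hA_def
  set B : ℝ := rexp (-lam * s) * lam + 2 * s * c with hB_def
  have hintX : Integrable X μ := by
    apply (integrable_const (1:ℝ)).mono' hXm.aestronglyMeasurable
    filter_upwards [hbdd] with ω h using h
  have hintX2 : Integrable (fun ω => X ω ^ 2) μ := by
    apply (integrable_const (1:ℝ)).mono' ((hXm.pow_const 2).aestronglyMeasurable)
    filter_upwards [hbdd] with ω h
    rw [Real.norm_eq_abs, abs_pow]
    exact pow_le_one₀ (abs_nonneg _) h
  have hintExp : Integrable (fun ω => rexp (lam * X ω)) μ := by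
    apply (integrable_const (rexp lam)).mono'
      (Real.measurable_exp.comp (hXm.const_mul lam)).aestronglyMeasurable
    filter_upwards [hbdd] with ω h
    show ‖rexp (lam * X ω)‖ ≤ rexp lam
    rw [Real.norm_eq_abs, abs_of_pos (Real.exp_pos _)]
    apply Real.exp_le_exp.2
    calc lam * X ω ≤ lam * 1 := mul_le_mul_of_nonneg_left (le_of_abs_le h) hlam
      _ = lam := mul_one lam
  have hintp : Integrable (fun ω => A + B * X ω + c * X ω ^ 2) μ :=
    ((integrable_const A).add (hintX.const_mul B)).add (hintX2.const_mul c)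
  have hstep1 : ∫ ω, rexp (lam * X ω) ∂μ ≤ ∫ ω, (A + B * X ω + c * X ω ^ 2) ∂μ := by
    apply integral_mono_ae hintExp hintp
    filter_upwards [hbdd] with ω h
    have hb := pointwise_bound hs hlam (le_of_abs_le h) (x := X ω)
    calc rexp (lam * X ω) ≤ rexp (-lam * s) * (1 + lam * (X ω + s)) +
          rexp (-lam * s) * (rexp (lam * (1 + s)) - 1 - lam * (1 + s)) / (1 + s)^2
            * (X ω + s)^2 := hb
      _ = A + B * X ω + c * X ω ^ 2 := by rw [hA_def, hB_def, hc_def]; ring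
  have hstep2 : ∫ ω, (A + B * X ω + c * X ω ^ 2) ∂μ = A + c * ∫ ω, X ω ^ 2 ∂μ := by
    have e1 : ∫ ω, (A + B * X ω + c * X ω ^ 2) ∂μ
        = (∫ ω, (A + B * X ω) ∂μ) + ∫ ω, c * X ω ^ 2 ∂μ :=
      integral_add ((integrable_const A).add (hintX.const_mul B)) (hintX2.const_mul c)
    have e2 : ∫ ω, (A + B * X ω) ∂μ = (∫ _ω, A ∂μ) + ∫ ω, B * X ω ∂μ :=
      integral_add (integrable_const A) (hintX.const_mul B)
    rw [e1, e2, integral_const, integral_const_mul, integral_const_mul, hmean]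
    simp
  have hstep3 : A + c * ∫ ω, X ω ^ 2 ∂μ ≤ A + c * s :=
    add_le_add_right (mul_le_mul_of_nonneg_left hvar hc) A
  have hmul : rexp (-lam * s) * rexp (lam * (1 + s)) = rexp lam := by
    rw [← Real.exp_add]; congr 1; ring
  have hstep4 : A + c * s = (rexp (-lam * s) + s * rexp lam) / (1 + s) := by
    rw [hA_def, hc_def]
    rw [← hmul]
    field_simp
    ring
  calc ∫ ω, rexp (lam * X ω) ∂μ ≤ A + c * ∫ ω, X ω ^ 2 ∂μ := hstep2 ▸ hstep1
    _ ≤ A + c * s := hstep3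
    _ = (rexp (-lam * s) + s * rexp lam) / (1 + s) := hstep4
    _ = (rexp (-lam * ε^2) + ε^2 * rexp lam) / (1 + ε^2) := by rw [hs_def]
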